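/- Let (M_k)_{k≥1} be invertible real n×n matrices, (Ω_k)_{k≥0} real symmetric positive semi-definite n×n matrices, and P_0 a real symmetric positive definite n×n matrix. Define P_{k+1} = M_{k+1}(I + P_kΩ_k)⁻¹P_kM_{k+1}ᵀ. Let M_{k:l} = M_k⋯M_{l+1} (with M_{k:k} = I) and Γ_k = Σ_{l=0}^{k-1} M_{k:l}^{-ᵀ}Ω_lM_{k:l}^{-1}. Then every P_k is positive definite (hence invertible) and P_k⁻¹ = M_{k:0}^{-ᵀ}P_0⁻¹M_{k:0}^{-1} + Γ_k. -/

import Mathlib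

open Matrix

/-- `Mres M l j` is the resolvent `M_{(l+j):l} = M_{l+j} ⋯ M_{l+1}`, so that
`M_{k:l} = Mres M l (k - l)` for `k ≥ l`, and `M_{k:k} = 1`. -/
def Mres {n : ℕ} (M : ℕ → Matrix (Fin n) (Fin n) ℝ) (l : ℕ) :
    ℕ → Matrix (Fin n) (Fin n) ℝ
  | 0 => 1
  | j + 1 => M (l + j + 1) * Mres M l j

/-- The information matrix `Γ_k = Σ_{l=0}^{k-1} M_{k:l}⁻ᵀ * Ω_l * M_{k:l}⁻¹`. -/
noncomputable def Gamma {n : ℕ} (M Ω : ℕ → Matrix (Fin n) (Fin n) ℝ) (k : ℕ) :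
    Matrix (Fin n) (Fin n) ℝ :=
  ∑ l ∈ Finset.range k, ((Mres M l (k - l))⁻¹)ᵀ * Ω l * (Mres M l (k - l))⁻¹

lemma conj_posDef {n : ℕ} {A B : Matrix (Fin n) (Fin n) ℝ}
    (hA : A.PosDef) (hB : IsUnit B) : (B * A * Bᵀ).PosDef := by
  have hBt : Bᴴ = Bᵀ := by ext i j; simp [conjTranspose_apply]
  rw [posDef_iff_dotProduct_mulVec]
  refine ⟨?_, fun x hx => ?_⟩
  · have := (hA.posSemidef.mul_mul_conjTranspose_same B).isHermitian
    rwa [hBt] at this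
  · have hBt' : IsUnit Bᵀ := by
      rw [isUnit_iff_isUnit_det] at hB ⊢
      rwa [det_transpose]
    have hx' : Bᵀ *ᵥ x ≠ 0 := by
      intro h
      exact hx ((mulVec_injective_iff_isUnit.mpr hBt') (a₁ := x) (a₂ := 0)
        (by simpa using h))
    have := hA.dotProduct_mulVec_pos hx'
    have hrw : star x ⬝ᵥ ((B * A * Bᵀ) *ᵥ x)
        = star (Bᵀ *ᵥ x) ⬝ᵥ (A *ᵥ (Bᵀ *ᵥ x)) := by
      simp only [star_trivial, ← mulVec_mulVec, dotProduct_mulVec, mulVec_transpose]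
    rwa [hrw]

lemma Gamma_succ {n : ℕ} (M Ω : ℕ → Matrix (Fin n) (Fin n) ℝ) (k : ℕ) :
    Gamma M Ω (k + 1)
      = ((M (k + 1))⁻¹)ᵀ * (Gamma M Ω k + Ω k) * (M (k + 1))⁻¹ := by
  unfold Gamma
  rw [Finset.sum_range_succ]
  have hlast : Mres M k (k + 1 - k) = M (k + 1) := by
    have : k + 1 - k = 1 := by omega
    rw [this]
    show M (k + 0 + 1) * Mres M k 0 = M (k + 1)
    simp [Mres]
  rw [hlast]
  have hstep : ∀ l ∈ Finset.range k,
      ((Mres M l (k + 1 - l))⁻¹)ᵀ * Ω l * (Mres M l (k + 1 - l))⁻¹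
        = ((M (k + 1))⁻¹)ᵀ * (((Mres M l (k - l))⁻¹)ᵀ * Ω l * (Mres M l (k - l))⁻¹)
          * (M (k + 1))⁻¹ := by
    intro l hl
    have hl' : l < k := Finset.mem_range.mp hl
    have h1 : k + 1 - l = (k - l) + 1 := by omega
    have hkl : l + (k - l) + 1 = k + 1 := by omega
    have h2 : Mres M l ((k - l) + 1) = M (k + 1) * Mres M l (k - l) := by
      show M (l + (k - l) + 1) * Mres M l (k - l) = _
      rw [hkl]
    rw [h1, h2, Matrix.mul_inv_rev, transpose_mul]
    noncomm_ring
  rw [Finset.sum_congr rfl hstep, mul_add, add_mul]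
  congr 1
  rw [Finset.mul_sum, Finset.sum_mul]

theorem kf_information_filter {n : ℕ}
    (M Ω : ℕ → Matrix (Fin n) (Fin n) ℝ)
    (hM : ∀ k, 1 ≤ k → IsUnit (M k)) (hΩ : ∀ k, (Ω k).PosSemidef)
    (P : ℕ → Matrix (Fin n) (Fin n) ℝ) (hP0 : (P 0).PosDef)
    (hrec : ∀ k, P (k + 1)
      = M (k + 1) * (1 + P k * Ω k)⁻¹ * P k * (M (k + 1))ᵀ) :
    ∀ k, (P k).PosDef ∧
      (P k)⁻¹ = ((Mres M 0 k)⁻¹)ᵀ * (P 0)⁻¹ * (Mres M 0 k)⁻¹ + Gamma M Ω k := by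
  intro k
  induction k with
  | zero =>
    refine ⟨hP0, ?_⟩
    simp [Mres, Gamma]
  | succ k ih =>
    obtain ⟨hPk, hinv⟩ := ih
    have hPdet : IsUnit (P k).det := (isUnit_iff_isUnit_det _).mp hPk.isUnit
    have hQ : ((P k)⁻¹ + Ω k).PosDef := hPk.inv.add_posSemidef (hΩ k)
    have hQdet : IsUnit ((P k)⁻¹ + Ω k).det := (isUnit_iff_isUnit_det _).mp hQ.isUnit
    have hMk : IsUnit (M (k + 1)) := hM (k + 1) (by omega)
    have hMkdet : IsUnit (M (k + 1)).det := (isUnit_iff_isUnit_det _).mp hMk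
    -- key algebraic identity
    have hkey : (1 + P k * Ω k)⁻¹ * P k = ((P k)⁻¹ + Ω k)⁻¹ := by
      have h1 : (1 : Matrix (Fin n) (Fin n) ℝ) + P k * Ω k
          = P k * ((P k)⁻¹ + Ω k) := by
        rw [mul_add, mul_nonsing_inv _ hPdet]
      rw [h1, Matrix.mul_inv_rev, mul_assoc, nonsing_inv_mul _ hPdet, mul_one]
    have hPsucc : P (k + 1) = M (k + 1) * ((P k)⁻¹ + Ω k)⁻¹ * (M (k + 1))ᵀ := by
      rw [hrec k, mul_assoc (M (k + 1)), hkey]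
    have hpos : (P (k + 1)).PosDef := by
      rw [hPsucc]; exact conj_posDef hQ.inv hMk
    refine ⟨hpos, ?_⟩
    have hinvsucc : (P (k + 1))⁻¹
        = ((M (k + 1))⁻¹)ᵀ * ((P k)⁻¹ + Ω k) * (M (k + 1))⁻¹ := by
      rw [hPsucc, Matrix.mul_inv_rev, Matrix.mul_inv_rev,
        nonsing_inv_nonsing_inv _ hQdet, ← transpose_nonsing_inv, ← mul_assoc]
    have hMres : Mres M 0 (k + 1) = M (k + 1) * Mres M 0 k := by
      show M (0 + k + 1) * Mres M 0 k = _
      rw [Nat.zero_add]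
    rw [hinvsucc, hinv, Gamma_succ, hMres, Matrix.mul_inv_rev, transpose_mul]
    noncomm_ring
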